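/- Define the sequence of surreal forms p : ℕ → PGame representing powers of the canonical 2 by p(0) = (2 : PGame) (the canonical form of 2, i.e., the natural-number cast of 2 into PGame) and p(n+1) = (2 : PGame) · p(n). Then for every n, the birthday of p(n) is a natural number, and the birthdays satisfy the recurrence g(p(n+1)) = g(p(n)) · (g(p(n)) + 1), with g(p(0)) = 2. -/

import Mathlib

set_option linter.deprecated false

universe u

namespace SetTheory

/-- Pre-game, as in Mathlib (December 2024): `SetTheory.PGame`. -/
inductive PGame : Type (u + 1)
  | mk : ∀ α β : Type u, (α → PGame) → (β → PGame) → PGame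

namespace PGame

instance : Zero PGame := ⟨⟨PEmpty, PEmpty, PEmpty.elim, PEmpty.elim⟩⟩

instance : One PGame := ⟨⟨PUnit, PEmpty, fun _ => 0, PEmpty.elim⟩⟩

def neg : PGame → PGame
  | ⟨l, r, L, R⟩ => ⟨r, l, fun i => neg (R i), fun i => neg (L i)⟩

instance : Neg PGame := ⟨neg⟩

noncomputable instance : Add PGame.{u} :=
  ⟨fun x y => by
    induction x generalizing y with | mk xl xr _ _ IHxl IHxr => _
    induction y with | mk yl yr yL yR IHyl IHyr => _
    have y := mk yl yr yL yR
    refine ⟨xl ⊕ yl, xr ⊕ yr, Sum.rec ?_ ?_, Sum.rec ?_ ?_⟩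
    · exact fun i => IHxl i y
    · exact IHyl
    · exact fun i => IHxr i y
    · exact IHyr⟩

noncomputable instance : Sub PGame := ⟨fun x y => x + -y⟩

noncomputable instance : NatCast PGame := ⟨Nat.unaryCast⟩

noncomputable instance : Mul PGame.{u} :=
  ⟨fun x y => by
    induction x generalizing y with | mk xl xr _ _ IHxl IHxr => _
    induction y with | mk yl yr yL yR IHyl IHyr => _
    have y := mk yl yr yL yR
    refine ⟨(xl × yl) ⊕ (xr × yr), (xl × yr) ⊕ (xr × yl), ?_, ?_⟩ <;> rintro (⟨i, j⟩ | ⟨i, j⟩)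
    · exact IHxl i y + IHyl j - IHxl i (yL j)
    · exact IHxr i y + IHyr j - IHxr i (yR j)
    · exact IHxl i y + IHyr j - IHxl i (yR j)
    · exact IHxr i y + IHyl j - IHxr i (yL j)⟩

/-- The birthday of a pre-game, as in Mathlib (December 2024). -/
noncomputable def birthday : PGame.{u} → Ordinal.{u}
  | ⟨_, _, xL, xR⟩ =>
    max (Ordinal.lsub.{u, u} fun i => birthday (xL i)) (Ordinal.lsub.{u, u} fun i => birthday (xR i))

end PGame

end SetTheory

open SetTheory PGame Ordinal

/-- Powers of the canonical surreal form of 2: `p 0 = 2`, `p (n+1) = 2 * p n`. -/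
noncomputable def powTwo : ℕ → PGame
  | 0 => (2 : ℕ)
  | n + 1 => ((2 : ℕ) : PGame) * powTwo n

namespace SetTheory.PGame

def LeftMoves : PGame.{u} → Type u
  | mk l _ _ _ => l

def RightMoves : PGame.{u} → Type u
  | mk _ r _ _ => r

def moveLeft : ∀ g : PGame.{u}, LeftMoves g → PGame.{u}
  | mk _ _ L _ => L

def moveRight : ∀ g : PGame.{u}, RightMoves g → PGame.{u}
  | mk _ _ _ R => R

theorem moveRecOn {C : PGame.{u} → Prop} (x : PGame.{u})
    (IH : ∀ y : PGame.{u}, (∀ i, C (y.moveLeft i)) → (∀ j, C (y.moveRight j)) → C y) : C x := by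
  induction x with
  | mk xl xr xL xR IHl IHr => exact IH _ IHl IHr

theorem birthday_def (x : PGame.{u}) : x.birthday = max (lsub.{u, u} fun i => (x.moveLeft i).birthday)
    (lsub.{u, u} fun i => (x.moveRight i).birthday) := by
  cases x; rfl

theorem birthday_moveLeft_lt {x : PGame.{u}} (i : x.LeftMoves) :
    (x.moveLeft i).birthday < x.birthday := by
  rw [birthday_def x]; exact lt_max_of_lt_left (lt_lsub _ i)

theorem birthday_moveRight_lt {x : PGame.{u}} (i : x.RightMoves) :
    (x.moveRight i).birthday < x.birthday := by
  rw [birthday_def x]; exact lt_max_of_lt_right (lt_lsub _ i)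

theorem lt_birthday_iff {x : PGame.{u}} {o : Ordinal.{u}} : o < x.birthday ↔
    (∃ i, o ≤ (x.moveLeft i).birthday) ∨ ∃ i, o ≤ (x.moveRight i).birthday := by
  rw [birthday_def, lt_max_iff, lt_lsub_iff, lt_lsub_iff]

theorem birthday_le_iff {x : PGame.{u}} {o : Ordinal.{u}} : x.birthday ≤ o ↔
    (∀ i, (x.moveLeft i).birthday < o) ∧ ∀ i, (x.moveRight i).birthday < o := by
  rw [birthday_def, max_le_iff, lsub_le_iff, lsub_le_iff]

theorem birthday_eq_zero {x : PGame.{u}} :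
    x.birthday = 0 ↔ IsEmpty x.LeftMoves ∧ IsEmpty x.RightMoves := by
  rw [birthday_def, ← lsub_eq_zero_iff, ← lsub_eq_zero_iff]
  constructor
  · intro h
    have h1 := le_max_left (lsub.{u, u} fun i => (x.moveLeft i).birthday)
      (lsub.{u, u} fun i => (x.moveRight i).birthday)
    have h2 := le_max_right (lsub.{u, u} fun i => (x.moveLeft i).birthday)
      (lsub.{u, u} fun i => (x.moveRight i).birthday)
    rw [h] at h1 h2
    exact ⟨nonpos_iff_eq_zero.1 h1, nonpos_iff_eq_zero.1 h2⟩
  · rintro ⟨h1, h2⟩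
    rw [h1, h2, max_self]

instance isEmpty_zero_leftMoves : IsEmpty (0 : PGame.{u}).LeftMoves :=
  inferInstanceAs (IsEmpty PEmpty)

instance isEmpty_zero_rightMoves : IsEmpty (0 : PGame.{u}).RightMoves :=
  inferInstanceAs (IsEmpty PEmpty)

instance isEmpty_one_rightMoves : IsEmpty (1 : PGame.{u}).RightMoves :=
  inferInstanceAs (IsEmpty PEmpty)

theorem birthday_zero : (0 : PGame.{u}).birthday = 0 :=
  birthday_eq_zero.2 ⟨inferInstance, inferInstance⟩

theorem birthday_one : (1 : PGame.{u}).birthday = 1 := by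
  apply le_antisymm
  · rw [birthday_le_iff]
    refine ⟨fun _ => ?_, fun i => isEmptyElim i⟩
    show (0 : PGame.{u}).birthday < 1
    rw [birthday_zero]; exact zero_lt_one
  · have h := birthday_moveLeft_lt (x := (1 : PGame.{u})) PUnit.unit
    have h2 : (0 : PGame.{u}).birthday = 0 := birthday_zero
    change (0 : PGame.{u}).birthday < _ at h
    rw [h2] at h
    simpa using Order.add_one_le_of_lt h

theorem birthday_neg (x : PGame.{u}) : (-x).birthday = x.birthday := by
  induction x with
  | mk xl xr xL xR IHl IHr =>
    show max (lsub.{u, u} fun i => (-(xR i)).birthday) (lsub.{u, u} fun i => (-(xL i)).birthday)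
      = max (lsub.{u, u} fun i => (xL i).birthday) (lsub.{u, u} fun i => (xR i).birthday)
    simp only [IHl, IHr]
    exact max_comm _ _

theorem leftMoves_add (x y : PGame.{u}) : (x + y).LeftMoves = (x.LeftMoves ⊕ y.LeftMoves) := by
  cases x; cases y; rfl

theorem rightMoves_add (x y : PGame.{u}) : (x + y).RightMoves = (x.RightMoves ⊕ y.RightMoves) := by
  cases x; cases y; rfl

def toLeftMovesAdd {x y : PGame.{u}} : x.LeftMoves ⊕ y.LeftMoves ≃ (x + y).LeftMoves :=
  Equiv.cast (leftMoves_add x y).symm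

def toRightMovesAdd {x y : PGame.{u}} : x.RightMoves ⊕ y.RightMoves ≃ (x + y).RightMoves :=
  Equiv.cast (rightMoves_add x y).symm

instance isEmpty_leftMoves_add (x y : PGame.{u}) [IsEmpty x.LeftMoves] [IsEmpty y.LeftMoves] :
    IsEmpty (x + y).LeftMoves := by
  rw [leftMoves_add]; infer_instance

instance isEmpty_rightMoves_add (x y : PGame.{u}) [IsEmpty x.RightMoves] [IsEmpty y.RightMoves] :
    IsEmpty (x + y).RightMoves := by
  rw [rightMoves_add]; infer_instance

theorem add_moveLeft_inl {x y : PGame.{u}} (i : x.LeftMoves) :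
    (x + y).moveLeft (toLeftMovesAdd (Sum.inl i)) = x.moveLeft i + y := by
  cases x; cases y; rfl

theorem add_moveLeft_inr {x y : PGame.{u}} (i : y.LeftMoves) :
    (x + y).moveLeft (toLeftMovesAdd (Sum.inr i)) = x + y.moveLeft i := by
  cases x; cases y; rfl

theorem add_moveRight_inl {x y : PGame.{u}} (i : x.RightMoves) :
    (x + y).moveRight (toRightMovesAdd (Sum.inl i)) = x.moveRight i + y := by
  cases x; cases y; rfl

theorem add_moveRight_inr {x y : PGame.{u}} (i : y.RightMoves) :
    (x + y).moveRight (toRightMovesAdd (Sum.inr i)) = x + y.moveRight i := by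
  cases x; cases y; rfl

@[elab_as_elim]
theorem leftMoves_add_cases {x y : PGame.{u}} (k) {P : (x + y).LeftMoves → Prop}
    (hl : ∀ i, P <| toLeftMovesAdd (Sum.inl i)) (hr : ∀ i, P <| toLeftMovesAdd (Sum.inr i)) :
    P k := by
  rw [← toLeftMovesAdd.apply_symm_apply k]
  rcases toLeftMovesAdd.symm k with i | i
  · exact hl i
  · exact hr i

@[elab_as_elim]
theorem rightMoves_add_cases {x y : PGame.{u}} (k) {P : (x + y).RightMoves → Prop}
    (hl : ∀ i, P <| toRightMovesAdd (Sum.inl i)) (hr : ∀ i, P <| toRightMovesAdd (Sum.inr i)) :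
    P k := by
  rw [← toRightMovesAdd.apply_symm_apply k]
  rcases toRightMovesAdd.symm k with i | i
  · exact hl i
  · exact hr i

theorem birthday_add_of_zero_left {a : PGame.{u}} (ha : a.birthday = 0) :
    ∀ b : PGame.{u}, (a + b).birthday = b.birthday := by
  obtain ⟨h1, h2⟩ := birthday_eq_zero.1 ha
  intro b
  induction b using moveRecOn with
  | _ b IHl IHr =>
    apply le_antisymm
    · rw [birthday_le_iff]
      constructor
      · intro k
        induction k using leftMoves_add_cases with
        | hl i => exact isEmptyElim i
        | hr i => rw [add_moveLeft_inr, IHl]; exact birthday_moveLeft_lt i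
      · intro k
        induction k using rightMoves_add_cases with
        | hl i => exact isEmptyElim i
        | hr i => rw [add_moveRight_inr, IHr]; exact birthday_moveRight_lt i
    · apply _root_.le_of_forall_lt
      intro o ho
      obtain (⟨j, hj⟩ | ⟨j, hj⟩) := lt_birthday_iff.1 ho
      · exact lt_birthday_iff.2 (Or.inl ⟨toLeftMovesAdd (Sum.inr j), by rw [add_moveLeft_inr, IHl]; exact hj⟩)
      · exact lt_birthday_iff.2 (Or.inr ⟨toRightMovesAdd (Sum.inr j), by rw [add_moveRight_inr, IHr]; exact hj⟩)

theorem birthday_add_of_zero_right {b : PGame.{u}} (hb : b.birthday = 0) :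
    ∀ a : PGame.{u}, (a + b).birthday = a.birthday := by
  obtain ⟨h1, h2⟩ := birthday_eq_zero.1 hb
  intro a
  induction a using moveRecOn with
  | _ a IHl IHr =>
    apply le_antisymm
    · rw [birthday_le_iff]
      constructor
      · intro k
        induction k using leftMoves_add_cases with
        | hl i => rw [add_moveLeft_inl, IHl]; exact birthday_moveLeft_lt i
        | hr i => exact isEmptyElim i
      · intro k
        induction k using rightMoves_add_cases with
        | hl i => rw [add_moveRight_inl, IHr]; exact birthday_moveRight_lt i
        | hr i => exact isEmptyElim i
    · apply _root_.le_of_forall_lt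
      intro o ho
      obtain (⟨j, hj⟩ | ⟨j, hj⟩) := lt_birthday_iff.1 ho
      · exact lt_birthday_iff.2 (Or.inl ⟨toLeftMovesAdd (Sum.inl j), by rw [add_moveLeft_inl, IHl]; exact hj⟩)
      · exact lt_birthday_iff.2 (Or.inr ⟨toRightMovesAdd (Sum.inl j), by rw [add_moveRight_inl, IHr]; exact hj⟩)

theorem birthday_sub_of_zero {b : PGame.{u}} (hb : b.birthday = 0) (a : PGame.{u}) :
    (a - b).birthday = a.birthday :=
  birthday_add_of_zero_right ((birthday_neg b).trans hb) a

theorem nat_of_lt_birthday {x : PGame.{u}} {m : ℕ} (hm : x.birthday = m) {o : Ordinal.{u}}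
    (ho : o < x.birthday) : ∃ m' : ℕ, o = m' ∧ m' < m := by
  rw [hm] at ho
  obtain ⟨m', rfl⟩ := Ordinal.lt_omega0.1 (ho.trans (Ordinal.natCast_lt_omega0 m))
  exact ⟨m', rfl, by exact_mod_cast ho⟩

theorem birthday_add_nat : ∀ (x y : PGame.{u}) (m n : ℕ), x.birthday = m → y.birthday = n →
    (x + y).birthday = ((m + n : ℕ) : Ordinal) := by
  intro x
  induction x using moveRecOn with
  | _ x IHxl IHxr =>
    intro y
    induction y using moveRecOn with
    | _ y IHyl IHyr =>
      intro m n hm hn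
      apply le_antisymm
      · rw [birthday_le_iff]
        constructor
        · intro k
          induction k using leftMoves_add_cases with
          | hl i =>
            obtain ⟨m', hm', hlt⟩ := nat_of_lt_birthday hm (birthday_moveLeft_lt i)
            rw [add_moveLeft_inl, IHxl i y m' n hm' hn, Nat.cast_lt]; omega
          | hr i =>
            obtain ⟨n', hn', hlt⟩ := nat_of_lt_birthday hn (birthday_moveLeft_lt i)
            rw [add_moveLeft_inr, IHyl i m n' hm hn', Nat.cast_lt]; omega
        · intro k
          induction k using rightMoves_add_cases with
          | hl i =>
            obtain ⟨m', hm', hlt⟩ := nat_of_lt_birthday hm (birthday_moveRight_lt i)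
            rw [add_moveRight_inl, IHxr i y m' n hm' hn, Nat.cast_lt]; omega
          | hr i =>
            obtain ⟨n', hn', hlt⟩ := nat_of_lt_birthday hn (birthday_moveRight_lt i)
            rw [add_moveRight_inr, IHyr i m n' hm hn', Nat.cast_lt]; omega
      · rcases m with _ | m
        · rcases n with _ | n
          · simp
          · have hs : ((n : ℕ) : Ordinal) < y.birthday := by
              rw [hn]; exact_mod_cast Nat.lt_succ_self n
            rw [show 0 + (n + 1) = (0 + n) + 1 by omega, Nat.cast_add_one]
            obtain (⟨j, hj⟩ | ⟨j, hj⟩) := lt_birthday_iff.1 hs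
            · obtain ⟨n', hn', hlt⟩ := nat_of_lt_birthday hn (birthday_moveLeft_lt j)
              have he : n' = n := by rw [hn'] at hj; exact le_antisymm (by omega) (by exact_mod_cast hj)
              subst he
              have h := birthday_moveLeft_lt (toLeftMovesAdd (x := x) (Sum.inr j))
              rw [add_moveLeft_inr, IHyl j 0 n' hm hn'] at h
              exact Order.add_one_le_of_lt h
            · obtain ⟨n', hn', hlt⟩ := nat_of_lt_birthday hn (birthday_moveRight_lt j)
              have he : n' = n := by rw [hn'] at hj; exact le_antisymm (by omega) (by exact_mod_cast hj)
              subst he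
              have h := birthday_moveRight_lt (toRightMovesAdd (x := x) (Sum.inr j))
              rw [add_moveRight_inr, IHyr j 0 n' hm hn'] at h
              exact Order.add_one_le_of_lt h
        · have hs : ((m : ℕ) : Ordinal) < x.birthday := by
            rw [hm]; exact_mod_cast Nat.lt_succ_self m
          rw [show m + 1 + n = (m + n) + 1 by omega, Nat.cast_add_one]
          obtain (⟨j, hj⟩ | ⟨j, hj⟩) := lt_birthday_iff.1 hs
          · obtain ⟨m', hm', hlt⟩ := nat_of_lt_birthday hm (birthday_moveLeft_lt j)
            have he : m' = m := by rw [hm'] at hj; exact le_antisymm (by omega) (by exact_mod_cast hj)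
            subst he
            have h := birthday_moveLeft_lt (toLeftMovesAdd (y := y) (Sum.inl j))
            rw [add_moveLeft_inl, IHxl j y m' n hm' hn] at h
            exact Order.add_one_le_of_lt h
          · obtain ⟨m', hm', hlt⟩ := nat_of_lt_birthday hm (birthday_moveRight_lt j)
            have he : m' = m := by rw [hm'] at hj; exact le_antisymm (by omega) (by exact_mod_cast hj)
            subst he
            have h := birthday_moveRight_lt (toRightMovesAdd (y := y) (Sum.inl j))
            rw [add_moveRight_inl, IHxr j y m' n hm' hn] at h
            exact Order.add_one_le_of_lt h

theorem birthday_sub_nat (x y : PGame.{u}) (m n : ℕ) (hm : x.birthday = m) (hn : y.birthday = n) :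
    (x - y).birthday = ((m + n : ℕ) : Ordinal) :=
  birthday_add_nat x (-y) m n hm ((birthday_neg y).trans hn)

theorem birthday_natCast : ∀ n : ℕ, ((n : PGame.{u})).birthday = n
  | 0 => birthday_zero
  | n + 1 => birthday_add_nat (n : PGame.{u}) 1 n 1 (birthday_natCast n) (by rw [birthday_one, Nat.cast_one])

theorem leftMoves_mul (x y : PGame.{u}) :
    (x * y).LeftMoves = (x.LeftMoves × y.LeftMoves ⊕ x.RightMoves × y.RightMoves) := by
  cases x; cases y; rfl

theorem rightMoves_mul (x y : PGame.{u}) :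
    (x * y).RightMoves = (x.LeftMoves × y.RightMoves ⊕ x.RightMoves × y.LeftMoves) := by
  cases x; cases y; rfl

def toLeftMovesMul {x y : PGame.{u}} :
    (x.LeftMoves × y.LeftMoves ⊕ x.RightMoves × y.RightMoves) ≃ (x * y).LeftMoves :=
  Equiv.cast (leftMoves_mul x y).symm

def toRightMovesMul {x y : PGame.{u}} :
    (x.LeftMoves × y.RightMoves ⊕ x.RightMoves × y.LeftMoves) ≃ (x * y).RightMoves :=
  Equiv.cast (rightMoves_mul x y).symm

theorem mul_moveLeft_inl {x y : PGame.{u}} {i j} :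
    (x * y).moveLeft (toLeftMovesMul (Sum.inl (i, j)))
      = x.moveLeft i * y + x * y.moveLeft j - x.moveLeft i * y.moveLeft j := by
  cases x; cases y; rfl

theorem mul_moveRight_inl {x y : PGame.{u}} {i j} :
    (x * y).moveRight (toRightMovesMul (Sum.inl (i, j)))
      = x.moveLeft i * y + x * y.moveRight j - x.moveLeft i * y.moveRight j := by
  cases x; cases y; rfl

@[elab_as_elim]
theorem leftMoves_mul_cases {x y : PGame.{u}} (k) {P : (x * y).LeftMoves → Prop}
    (hl : ∀ ix iy, P <| toLeftMovesMul (Sum.inl ⟨ix, iy⟩))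
    (hr : ∀ jx jy, P <| toLeftMovesMul (Sum.inr ⟨jx, jy⟩)) : P k := by
  rw [← toLeftMovesMul.apply_symm_apply k]
  rcases toLeftMovesMul.symm k with ⟨ix, iy⟩ | ⟨jx, jy⟩
  · exact hl ix iy
  · exact hr jx jy

@[elab_as_elim]
theorem rightMoves_mul_cases {x y : PGame.{u}} (k) {P : (x * y).RightMoves → Prop}
    (hl : ∀ ix jy, P <| toRightMovesMul (Sum.inl ⟨ix, jy⟩))
    (hr : ∀ jx iy, P <| toRightMovesMul (Sum.inr ⟨jx, iy⟩)) : P k := by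
  rw [← toRightMovesMul.apply_symm_apply k]
  rcases toRightMovesMul.symm k with ⟨ix, iy⟩ | ⟨jx, jy⟩
  · exact hl ix iy
  · exact hr jx jy

instance isEmpty_leftMoves_mul (x y : PGame.{u})
    [IsEmpty (x.LeftMoves × y.LeftMoves ⊕ x.RightMoves × y.RightMoves)] :
    IsEmpty (x * y).LeftMoves := by
  cases x; cases y; assumption

instance isEmpty_rightMoves_mul (x y : PGame.{u})
    [IsEmpty (x.LeftMoves × y.RightMoves ⊕ x.RightMoves × y.LeftMoves)] :
    IsEmpty (x * y).RightMoves := by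
  cases x; cases y; assumption

end SetTheory.PGame

/-- If `c` has no right moves, nonempty left moves, and all left options of `c` are
birthday-zero games, then `c * x` has the same birthday as `x`. -/
theorem birthday_mul_of_one_like (c : PGame) (hR : IsEmpty c.RightMoves)
    (hL : Nonempty c.LeftMoves) (h0 : ∀ i, (c.moveLeft i).birthday = 0) :
    ∀ x : PGame, (c * x).birthday = x.birthday := by
  intro x
  induction x using PGame.moveRecOn with
  | _ x IHl IHr =>
    have hz : ∀ (i : c.LeftMoves) (z : PGame), (c.moveLeft i * z).birthday = 0 := by
      intro i z
      obtain ⟨h1, h2⟩ := PGame.birthday_eq_zero.1 (h0 i)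
      rw [PGame.birthday_eq_zero]
      exact ⟨isEmpty_leftMoves_mul _ _, isEmpty_rightMoves_mul _ _⟩
    apply le_antisymm
    · rw [PGame.birthday_def]
      apply max_le
      · apply Ordinal.lsub_le
        intro k
        induction k using PGame.leftMoves_mul_cases with
        | hl i j =>
          rw [mul_moveLeft_inl, birthday_sub_of_zero (hz _ _), birthday_add_of_zero_left (hz _ _), IHl]
          exact birthday_moveLeft_lt j
        | hr i j => exact (hR.elim i)
      · apply Ordinal.lsub_le
        intro k
        induction k using PGame.rightMoves_mul_cases with
        | hl i j =>
          rw [mul_moveRight_inl, birthday_sub_of_zero (hz _ _), birthday_add_of_zero_left (hz _ _), IHr]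
          exact birthday_moveRight_lt j
        | hr i j => exact (hR.elim i)
    · apply _root_.le_of_forall_lt
      intro o ho
      obtain (⟨j, hj⟩ | ⟨j, hj⟩) := PGame.lt_birthday_iff.1 ho
      · refine PGame.lt_birthday_iff.2 (Or.inl ⟨toLeftMovesMul (Sum.inl ⟨hL.some, j⟩), ?_⟩)
        rw [mul_moveLeft_inl, birthday_sub_of_zero (hz _ _), birthday_add_of_zero_left (hz _ _), IHl]
        exact hj
      · refine PGame.lt_birthday_iff.2 (Or.inr ⟨toRightMovesMul (Sum.inl ⟨hL.some, j⟩), ?_⟩)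
        rw [mul_moveRight_inl, birthday_sub_of_zero (hz _ _), birthday_add_of_zero_left (hz _ _), IHr]
        exact hj

/-- If `y` has no right moves, nonempty left moves, and each left option of `y` multiplies
trivially (preserves birthdays), then the birthday of `y * x` is `k * (k + 1)` whenever
the birthday of `x` is a natural number `k`. -/
theorem birthday_mul_of_two_like (y : PGame) (hR : IsEmpty y.RightMoves)
    (hL : Nonempty y.LeftMoves)
    (hy : ∀ (i : y.LeftMoves) (z : PGame), (y.moveLeft i * z).birthday = z.birthday) :
    ∀ (x : PGame) (k : ℕ), x.birthday = k → (y * x).birthday = ((k * (k + 1) : ℕ) : Ordinal) := by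
  intro x
  induction x using PGame.moveRecOn with
  | _ x IHl IHr =>
    intro k hk
    have key : ∀ (z : PGame) (i : y.LeftMoves), z.birthday < (k : Ordinal) →
        (∀ m : ℕ, z.birthday = m → (y * z).birthday = ((m * (m + 1) : ℕ) : Ordinal)) →
        ∀ m : ℕ, z.birthday = m →
        (y.moveLeft i * x + y * z - y.moveLeft i * z).birthday
          = ((k + m * (m + 1) + m : ℕ) : Ordinal) := by
      intro z i hz hIH m hm
      rw [birthday_sub_nat _ _ (k + m * (m + 1)) m
        (birthday_add_nat _ _ k (m * (m + 1)) (by rw [hy, hk]) (hIH m hm)) (by rw [hy, hm])]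
    have hnat : ∀ {z : PGame}, z.birthday < (k : Ordinal) →
        ∃ m : ℕ, z.birthday = m ∧ m < k := by
      intro z hz
      obtain ⟨m, hm⟩ := Ordinal.lt_omega0.1 (hz.trans (Ordinal.natCast_lt_omega0 k))
      exact ⟨m, hm, by exact_mod_cast hm ▸ hz⟩
    match k, hk with
    | 0, hk =>
      obtain ⟨h1, h2⟩ := PGame.birthday_eq_zero.1 hk
      have : (y * x).birthday = 0 := by
        rw [PGame.birthday_eq_zero]
        exact ⟨isEmpty_leftMoves_mul _ _, isEmpty_rightMoves_mul _ _⟩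
      simpa using this
    | s + 1, hk =>
      apply le_antisymm
      · rw [PGame.birthday_def]
        apply max_le
        · apply Ordinal.lsub_le
          intro l
          induction l using PGame.leftMoves_mul_cases with
          | hl i j =>
            have hlt : (x.moveLeft j).birthday < ((s + 1 : ℕ) : Ordinal) :=
              hk ▸ birthday_moveLeft_lt j
            obtain ⟨m, hm, hms⟩ := hnat hlt
            rw [mul_moveLeft_inl, key _ i hlt (IHl j) m hm, Nat.cast_lt]
            nlinarith
          | hr i j => exact (hR.elim i)
        · apply Ordinal.lsub_le
          intro l
          induction l using PGame.rightMoves_mul_cases with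
          | hl i j =>
            have hlt : (x.moveRight j).birthday < ((s + 1 : ℕ) : Ordinal) :=
              hk ▸ birthday_moveRight_lt j
            obtain ⟨m, hm, hms⟩ := hnat hlt
            rw [mul_moveRight_inl, key _ i hlt (IHr j) m hm, Nat.cast_lt]
            nlinarith
          | hr i j => exact (hR.elim i)
      · -- find a move of x of birthday exactly s
        have hs : ((s : ℕ) : Ordinal) < x.birthday := by
          rw [hk]; exact_mod_cast Nat.lt_succ_self s
        have harith : ((s + 1) * (s + 1 + 1) : ℕ) = (s + 1) + s * (s + 1) + s + 1 := by ring
        rw [harith]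
        obtain (⟨j, hj⟩ | ⟨j, hj⟩) := PGame.lt_birthday_iff.1 hs
        · have hlt : (x.moveLeft j).birthday < ((s + 1 : ℕ) : Ordinal) :=
            hk ▸ birthday_moveLeft_lt j
          have hm : (x.moveLeft j).birthday = (s : Ordinal) := by
            obtain ⟨m, hm, hms⟩ := hnat hlt
            rw [hm] at hj ⊢
            have : m = s := le_antisymm (by exact_mod_cast Nat.lt_succ_iff.1 hms)
              (by exact_mod_cast hj)
            rw [this]
          have hb := key _ hL.some hlt (IHl j) s hm
          have hlt2 : (((s + 1) + s * (s + 1) + s : ℕ) : Ordinal) < (y * x).birthday := by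
            refine PGame.lt_birthday_iff.2 (Or.inl ⟨toLeftMovesMul (Sum.inl ⟨hL.some, j⟩), ?_⟩)
            rw [mul_moveLeft_inl, hb]
          have := Order.add_one_le_of_lt hlt2
          exact_mod_cast this
        · have hlt : (x.moveRight j).birthday < ((s + 1 : ℕ) : Ordinal) :=
            hk ▸ birthday_moveRight_lt j
          have hm : (x.moveRight j).birthday = (s : Ordinal) := by
            obtain ⟨m, hm, hms⟩ := hnat hlt
            rw [hm] at hj ⊢
            have : m = s := le_antisymm (by exact_mod_cast Nat.lt_succ_iff.1 hms)
              (by exact_mod_cast hj)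
            rw [this]
          have hb := key _ hL.some hlt (IHr j) s hm
          have hlt2 : (((s + 1) + s * (s + 1) + s : ℕ) : Ordinal) < (y * x).birthday := by
            refine PGame.lt_birthday_iff.2 (Or.inr ⟨toRightMovesMul (Sum.inl ⟨hL.some, j⟩), ?_⟩)
            rw [mul_moveRight_inl, hb]
          have := Order.add_one_le_of_lt hlt2
          exact_mod_cast this

theorem two_pgame_eq : ((2 : ℕ) : PGame) = 0 + 1 + 1 := rfl

theorem birthday_one_like_aux (c : PGame) (hc : c.birthday = 1) (i : c.LeftMoves) :
    (c.moveLeft i).birthday = 0 := by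
  have := birthday_moveLeft_lt i
  rw [hc] at this
  exact Ordinal.lt_one_iff_zero.1 this

theorem birthday_zero_add_zero_add_one : ((0 + 0 + 1 : PGame)).birthday = 1 := by
  rw [birthday_add_of_zero_left (by rw [birthday_add_of_zero_left birthday_zero, birthday_zero]),
    birthday_one]

theorem birthday_zero_add_one_add_zero : ((0 + 1 + 0 : PGame)).birthday = 1 := by
  rw [birthday_add_of_zero_right birthday_zero, birthday_add_of_zero_left birthday_zero, birthday_one]

theorem birthday_two_mul (x : PGame) (k : ℕ) (hk : x.birthday = k) :
    (((2 : ℕ) : PGame) * x).birthday = ((k * (k + 1) : ℕ) : Ordinal) := by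
  refine birthday_mul_of_two_like _ ?_ ?_ ?_ x k hk
  · rw [two_pgame_eq]; infer_instance
  · rw [two_pgame_eq]
    exact ⟨toLeftMovesAdd (Sum.inr PUnit.unit)⟩
  · rw [two_pgame_eq]
    rintro ((a | a) | a) z
    · exact isEmptyElim a
    · show ((0 + 0 + 1 : PGame) * z).birthday = z.birthday
      exact birthday_mul_of_one_like _ inferInstance
        ⟨toLeftMovesAdd (x := 0 + 0) (y := 1) (Sum.inr PUnit.unit)⟩
        (birthday_one_like_aux _ birthday_zero_add_zero_add_one) z
    · show ((0 + 1 + 0 : PGame) * z).birthday = z.birthday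
      exact birthday_mul_of_one_like _ inferInstance
        ⟨toLeftMovesAdd (x := 0 + 1) (y := 0) (Sum.inl (toLeftMovesAdd (x := 0) (y := 1) (Sum.inr PUnit.unit)))⟩
        (birthday_one_like_aux _ birthday_zero_add_one_add_zero) z

theorem powTwo_birthday_nat : ∀ n : ℕ, ∃ k : ℕ, (powTwo n).birthday = (k : Ordinal)
  | 0 => ⟨2, by rw [show powTwo 0 = ((2 : ℕ) : PGame) from rfl, PGame.birthday_natCast]⟩
  | n + 1 => by
    obtain ⟨k, hk⟩ := powTwo_birthday_nat n
    exact ⟨k * (k + 1), birthday_two_mul _ k hk⟩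

theorem birthday_powTwo :
    (∀ n : ℕ, ∃ k : ℕ, (powTwo n).birthday = (k : Ordinal)) ∧
    (powTwo 0).birthday = 2 ∧
    ∀ n : ℕ, (powTwo (n + 1)).birthday =
      (powTwo n).birthday * ((powTwo n).birthday + 1) := by
  refine ⟨powTwo_birthday_nat, ?_, fun n => ?_⟩
  · rw [show powTwo 0 = ((2 : ℕ) : PGame) from rfl, PGame.birthday_natCast]
    norm_num
  · obtain ⟨k, hk⟩ := powTwo_birthday_nat n
    rw [show powTwo (n + 1) = ((2 : ℕ) : PGame) * powTwo n from rfl,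
      birthday_two_mul _ k hk, hk, Ordinal.natCast_mul]
    push_cast
    ring_nf
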